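/- Let F : ℝ → ℝ be continuous, let t₀, u₀, u_tt⁰ ∈ ℝ and u_t⁰ > 0, and let α, β, γ, δ : ℝ → ℝ be differentiable on an open interval J containing t₀ and satisfy α' = −(F/2)β, β' = α, γ' = −(F/2)δ, δ' = γ on J, with initial values α(t₀) = √(u_t⁰) − u₀·u_tt⁰/(2(u_t⁰)^{3/2}), β(t₀) = u₀/√(u_t⁰), γ(t₀) = −u_tt⁰/(2(u_t⁰)^{3/2}), δ(t₀) = 1/√(u_t⁰), and suppose δ(t) ≠ 0 on J. Then u = β/δ satisfies u'''(t)/u'(t) − (3/2)·(u''(t)/u'(t))² = F(t) on J, together with the initial conditions u(t₀) = u₀, u'(t₀) = u_t⁰, u''(t₀) = u_tt⁰. -/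

import Mathlib

/-- Reconstruction of the solution of Schwarz' equation with prescribed initial
conditions from the left moving frame solving the reconstruction equations. -/
theorem schwarz_reconstruction_ivp
    (F α β γ δ u : ℝ → ℝ) (a b t₀ u₀ ut₀ utt₀ : ℝ)
    (hF : Continuous F)
    (hut₀ : 0 < ut₀)
    (ht₀ : t₀ ∈ Set.Ioo a b)
    (hα : ∀ t ∈ Set.Ioo a b, HasDerivAt α (-(F t / 2) * β t) t)
    (hβ : ∀ t ∈ Set.Ioo a b, HasDerivAt β (α t) t)
    (hγ : ∀ t ∈ Set.Ioo a b, HasDerivAt γ (-(F t / 2) * δ t) t)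
    (hδ : ∀ t ∈ Set.Ioo a b, HasDerivAt δ (γ t) t)
    (hα0 : α t₀ = Real.sqrt ut₀ - u₀ * utt₀ / (2 * ut₀ ^ ((3 : ℝ) / 2)))
    (hβ0 : β t₀ = u₀ / Real.sqrt ut₀)
    (hγ0 : γ t₀ = -utt₀ / (2 * ut₀ ^ ((3 : ℝ) / 2)))
    (hδ0 : δ t₀ = 1 / Real.sqrt ut₀)
    (hδne : ∀ t ∈ Set.Ioo a b, δ t ≠ 0)
    (hu : ∀ s, u s = β s / δ s) :
    (∀ t ∈ Set.Ioo a b,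
      deriv (deriv (deriv u)) t / deriv u t
        - (3 / 2) * (deriv (deriv u) t / deriv u t) ^ 2 = F t) ∧
    u t₀ = u₀ ∧ deriv u t₀ = ut₀ ∧ deriv (deriv u) t₀ = utt₀ := by
  have hsq : Real.sqrt ut₀ ≠ 0 := ne_of_gt (Real.sqrt_pos.mpr hut₀)
  have hrp : ut₀ ^ ((3 : ℝ) / 2) ≠ 0 := ne_of_gt (Real.rpow_pos_of_pos hut₀ _)
  set s : Set ℝ := Set.Ioo a b with hs
  have hopen : IsOpen s := isOpen_Ioo
  -- Wronskian
  set W : ℝ → ℝ := fun t => α t * δ t - β t * γ t with hWdef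
  have hWd : ∀ t ∈ s, HasDerivAt W 0 t := by
    intro t ht
    have h := ((hα t ht).mul (hδ t ht)).sub ((hβ t ht).mul (hγ t ht))
    refine h.congr_deriv ?_
    ring
  have hW1 : ∀ t ∈ s, W t = 1 := by
    intro t ht
    have hconst : W t = W t₀ := by
      apply (convex_Ioo a b).is_const_of_fderivWithin_eq_zero
        (fun x hx => ((hWd x hx).differentiableAt).differentiableWithinAt)
        (fun x hx => ?_) ht ht₀
      rw [fderivWithin_of_isOpen hopen hx, (hWd x hx).hasFDerivAt.fderiv]
      ext y; simp
    rw [hconst, hWdef]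
    simp only [hα0, hβ0, hγ0, hδ0]
    field_simp
    ring
  -- first derivative
  have hud : ∀ t ∈ s, HasDerivAt u (1 / δ t ^ 2) t := by
    intro t ht
    have h : HasDerivAt (fun x => β x / δ x)
        ((α t * δ t - β t * γ t) / δ t ^ 2) t :=
      (hβ t ht).div (hδ t ht) (hδne t ht)
    have hu' : u = fun x => β x / δ x := funext hu
    rw [hu']
    have hw := hW1 t ht
    simp only [hWdef] at hw
    rw [hw] at h
    exact h
  have hderiv1 : ∀ t ∈ s, deriv u t = 1 / δ t ^ 2 := fun t ht => (hud t ht).deriv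
  -- second derivative
  have hud2 : ∀ t ∈ s, HasDerivAt (deriv u) (-2 * γ t / δ t ^ 3) t := by
    intro t ht
    have hv : HasDerivAt (fun x => 1 / δ x ^ 2)
        ((0 * δ t ^ 2 - 1 * (2 * δ t ^ 1 * γ t)) / (δ t ^ 2) ^ 2) t :=
      (hasDerivAt_const t 1).div ((hδ t ht).pow 2) (pow_ne_zero 2 (hδne t ht))
    have heq : deriv u =ᶠ[nhds t] fun x => 1 / δ x ^ 2 :=
      Filter.eventuallyEq_of_mem (hopen.mem_nhds ht) (fun x hx => hderiv1 x hx)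
    have h := hv.congr_of_eventuallyEq heq
    refine h.congr_deriv ?_
    have := hδne t ht
    field_simp
    ring
  have hderiv2 : ∀ t ∈ s, deriv (deriv u) t = -2 * γ t / δ t ^ 3 :=
    fun t ht => (hud2 t ht).deriv
  -- third derivative
  have hud3 : ∀ t ∈ s,
      HasDerivAt (deriv (deriv u)) (F t / δ t ^ 2 + 6 * γ t ^ 2 / δ t ^ 4) t := by
    intro t ht
    have hnum : HasDerivAt (fun x => -2 * γ x) (-2 * (-(F t / 2) * δ t)) t :=
      (hγ t ht).const_mul (-2)
    have hv : HasDerivAt (fun x => -2 * γ x / δ x ^ 3)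
        ((-2 * (-(F t / 2) * δ t) * δ t ^ 3 - -2 * γ t * (3 * δ t ^ 2 * γ t))
          / (δ t ^ 3) ^ 2) t :=
      hnum.div ((hδ t ht).pow 3) (pow_ne_zero 3 (hδne t ht))
    have heq : deriv (deriv u) =ᶠ[nhds t] fun x => -2 * γ x / δ x ^ 3 :=
      Filter.eventuallyEq_of_mem (hopen.mem_nhds ht) (fun x hx => hderiv2 x hx)
    have h := hv.congr_of_eventuallyEq heq
    refine h.congr_deriv ?_
    have := hδne t ht
    field_simp
    ring
  have hderiv3 : ∀ t ∈ s,
      deriv (deriv (deriv u)) t = F t / δ t ^ 2 + 6 * γ t ^ 2 / δ t ^ 4 :=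
    fun t ht => (hud3 t ht).deriv
  -- sqrt / rpow identities
  have hcube : Real.sqrt ut₀ ^ 3 = ut₀ ^ ((3 : ℝ) / 2) := by
    rw [Real.sqrt_eq_rpow, ← Real.rpow_natCast (ut₀ ^ ((1:ℝ)/2)) 3,
      ← Real.rpow_mul hut₀.le]
    norm_num
  refine ⟨?_, ?_, ?_, ?_⟩
  · intro t ht
    rw [hderiv1 t ht, hderiv2 t ht, hderiv3 t ht]
    have hd := hδne t ht
    field_simp
    ring
  · rw [hu t₀, hβ0, hδ0]
    field_simp
  · rw [hderiv1 t₀ ht₀, hδ0]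
    rw [div_pow, one_pow, one_div, one_div, inv_inv, Real.sq_sqrt hut₀.le]
  · rw [hderiv2 t₀ ht₀, hγ0, hδ0]
    rw [div_pow, one_pow]
    rw [← hcube]
    field_simp
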